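/- (Theorem 1) Let f : x ↦ a·x·b and g : x ↦ c·x·d be simple rotations, where f is the composition of the reflections R_y and R_z (so a = z·conj y, b = conj y·z) and g is the composition of the reflections R_u and R_w (so c = w·conj u, d = conj u·w), with y, z, u, w unit quaternions. Then the composition g ∘ f : x ↦ (c·a)·x·(b·d) is a simple rotation, i.e. Re(c·a) = Re(b·d), if and only if the four normals y, z, u, w are linearly dependent over ℝ. -/

import Mathlib

open Quaternion
open scoped InnerProductSpace

private lemma key_identity (y z u w : ℍ[ℝ]) :
    (w * star u * (z * star y)).re - (star y * z * (star u * w)).re =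
      -2 * (Matrix.of ![![y.re, y.imI, y.imJ, y.imK], ![z.re, z.imI, z.imJ, z.imK],
        ![u.re, u.imI, u.imJ, u.imK], ![w.re, w.imI, w.imJ, w.imK]]).det := by
  simp [Matrix.det_succ_row_zero, Fin.sum_univ_succ, Fin.succAbove, Fin.castSucc, Fin.castAdd, Fin.castLE, Quaternion.re_mul, Quaternion.re_star, Quaternion.imI_star,
    Quaternion.imJ_star, Quaternion.imK_star, Quaternion.imI_mul, Quaternion.imJ_mul,
    Quaternion.imK_mul]
  ring

private lemma li_iff_det (y z u w : ℍ[ℝ]) :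
    LinearIndependent ℝ ![y, z, u, w] ↔
      (Matrix.of ![![y.re, y.imI, y.imJ, y.imK], ![z.re, z.imI, z.imJ, z.imK],
        ![u.re, u.imI, u.imJ, u.imK], ![w.re, w.imI, w.imJ, w.imK]]).det ≠ 0 := by
  let e := QuaternionAlgebra.basisOneIJK (-1 : ℝ) (0 : ℝ) (-1 : ℝ)
  have hM : e.toMatrix ![y, z, u, w] =
      (Matrix.of ![![y.re, y.imI, y.imJ, y.imK], ![z.re, z.imI, z.imJ, z.imK],
        ![u.re, u.imI, u.imJ, u.imK], ![w.re, w.imI, w.imJ, w.imK]]).transpose := by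
    ext i j
    rw [Module.Basis.toMatrix_apply, Matrix.transpose_apply]
    fin_cases j <;> fin_cases i <;>
      simp [e, QuaternionAlgebra.coe_basisOneIJK_repr (q := y), QuaternionAlgebra.coe_basisOneIJK_repr (q := z),
        QuaternionAlgebra.coe_basisOneIJK_repr (q := u), QuaternionAlgebra.coe_basisOneIJK_repr (q := w)]
  constructor
  · intro h
    have hspan : Submodule.span ℝ (Set.range ![y, z, u, w]) = ⊤ := by
      apply h.span_eq_top_of_card_eq_finrank
      simp [Quaternion.finrank_eq_four]
    have := (Module.Basis.is_basis_iff_det e).mp ⟨h, hspan⟩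
    replace this : IsUnit (e.toMatrix ![y, z, u, w]).det := this
    rw [hM, Matrix.det_transpose] at this
    exact this.ne_zero
  · intro h
    have : IsUnit (e.det ![y, z, u, w]) := by
      show IsUnit (e.toMatrix ![y, z, u, w]).det
      rw [hM, Matrix.det_transpose]
      exact isUnit_iff_ne_zero.mpr h
    exact ((Module.Basis.is_basis_iff_det e).mpr this).1

/-- (Theorem 1) Let `f : x ↦ a x b` and `g : x ↦ c x d` be simple rotations, where `f` is
the composition of the reflections `R_y` and `R_z` (so `a = z conj y`, `b = conj y z`) and
`g` is the composition of the reflections `R_u` and `R_w` (so `c = w conj u`,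
`d = conj u w`), with `y, z, u, w` unit quaternions. Then `g ∘ f : x ↦ (c a) x (b d)` is a
simple rotation, i.e. `Re (c a) = Re (b d)`, iff the four normals `y, z, u, w` are
linearly dependent over `ℝ`. -/
theorem composition_simple_iff_normals_dependent (y z u w : ℍ[ℝ])
    (hy : ‖y‖ = 1) (hz : ‖z‖ = 1) (hu : ‖u‖ = 1) (hw : ‖w‖ = 1)
    (a b c d : ℍ[ℝ])
    (hA : a = z * star y) (hB : b = star y * z)
    (hC : c = w * star u) (hD : d = star u * w) :
    (c * a).re = (b * d).re ↔ ¬ LinearIndependent ℝ ![y, z, u, w] := by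
  subst hA hB hC hD
  rw [li_iff_det, not_not]
  have := key_identity y z u w
  constructor
  · intro h
    have h2 : -2 * (Matrix.of ![![y.re, y.imI, y.imJ, y.imK], ![z.re, z.imI, z.imJ, z.imK],
        ![u.re, u.imI, u.imJ, u.imK], ![w.re, w.imI, w.imJ, w.imK]]).det = 0 := by
      rw [← this, h]; ring
    linarith [h2]
  · intro h
    rw [h] at this
    linarith [this]
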